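/- Let T1, T2, T* be trees on the same label set 𝒳 and d' ≤ d nonnegative integers. Suppose d < d_LR(T1, T2) ≤ d' + d, that there are X1, X2 ⊆ 𝒳 with T1 − X1 = T* − X1, T2 − X2 = T* − X2, |X1| ≤ d', |X2| ≤ d, and let x ∈ X1 \ X2. Then there is a set P of trees on label set 𝒳 with |P| ≤ 18(d + d') + 8 such that every tree T' satisfying d_LR(T', T*) < d_LR(T1, T*) that can be obtained from T1 by pruning the leaf x and regrafting it belongs to P. -/

import Mathlib

/-!
Common framework: rooted binary trees with leaves bijectively labeled by a
finite label set, leaf removal, restriction, the leaf-removal distance `d_LR`,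
compatibility, leaf-disagreements, triplets, LPR moves, etc.
-/

universe u

/-- A rooted binary tree whose leaves carry labels from `α`. -/
inductive LTree (α : Type u) : Type u where
  | leaf : α → LTree α
  | node : LTree α → LTree α → LTree α

namespace LTree

variable {α : Type u} [DecidableEq α]

/-- The set of leaf labels of a tree. -/
def labels : LTree α → Finset α
  | leaf a => {a}
  | node l r => labels l ∪ labels r

/-- A tree is `Good` when its leaves carry pairwise distinct labels
(i.e. the leaves are bijectively labeled). -/
def Good : LTree α → Prop
  | leaf _ => True
  | node l r => Good l ∧ Good r ∧ Disjoint (labels l) (labels r)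

/-- `T` is a (rooted binary, uniquely leaf-labeled) tree on label set `𝒳`. -/
def IsTreeOn (T : LTree α) (𝒳 : Finset α) : Prop :=
  Good T ∧ labels T = 𝒳

/-- Equality of rooted trees: children of a node are unordered. -/
inductive Iso : LTree α → LTree α → Prop
  | leaf (a : α) : Iso (leaf a) (leaf a)
  | node {l₁ r₁ l₂ r₂ : LTree α} :
      Iso l₁ l₂ → Iso r₁ r₂ → Iso (node l₁ r₁) (node l₂ r₂)
  | swap {l₁ r₁ l₂ r₂ : LTree α} :
      Iso l₁ r₂ → Iso r₁ l₂ → Iso (node l₁ r₁) (node l₂ r₂)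

/-- Equality of possibly empty trees (`none` is the empty tree). -/
def OptIso : Option (LTree α) → Option (LTree α) → Prop
  | none, none => True
  | some t₁, some t₂ => Iso t₁ t₂
  | _, _ => False

/-- Restriction `T|_S`: keep exactly the leaves with labels in `S`, suppressing
the resulting degree-two vertices and degree-one roots; the result is `none`
when no leaf survives. -/
def restrict : LTree α → Finset α → Option (LTree α)
  | leaf a, S => if a ∈ S then some (leaf a) else none
  | node l r, S =>
    match restrict l S, restrict r S with
    | some l', some r' => some (node l' r')
    | some l', none => some l'
    | none, some r' => some r'
    | none, none => none

/-- `T − X`: remove from `T` every leaf whose label lies in `X`. -/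
def remove (T : LTree α) (X : Finset α) : Option (LTree α) :=
  restrict T (labels T \ X)

/-- The leaf-removal distance `d_LR(T₁,T₂)`: the minimum number of labels
whose removal makes the two trees equal. -/
noncomputable def dLR (T₁ T₂ : LTree α) : ℕ :=
  sInf {n | ∃ X : Finset α, X ⊆ labels T₁ ∪ labels T₂ ∧ X.card = n ∧
    OptIso (remove T₁ X) (remove T₂ X)}

def labelsO : Option (LTree α) → Finset α
  | none => ∅
  | some t => labels t

def GoodO : Option (LTree α) → Prop
  | none => True
  | some t => Good t

def restrictO : Option (LTree α) → Finset α → Option (LTree α)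
  | none, _ => none
  | some t, S => restrict t S

/-- A family of (possibly empty) trees is compatible if there is a single tree,
on the union of their label sets, which displays all of them. -/
def CompatibleFamO {ι : Type*} (f : ι → Option (LTree α)) : Prop :=
  ∃ TO : Option (LTree α), GoodO TO ∧
    (↑(labelsO TO) : Set α) = (⋃ i, ↑(labelsO (f i))) ∧
    ∀ i, OptIso (restrictO TO (labelsO (f i))) (f i)

/-- A family of trees is compatible if a single tree displays all of them. -/
def CompatibleFam {ι : Type*} (𝒯 : ι → LTree α) : Prop :=
  CompatibleFamO fun i => some (𝒯 i)

/-- `X` is a leaf-disagreement for the family `𝒯`: removing `X i` from `𝒯 i`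
yields a compatible family. -/
def IsLeafDisagreement {ι : Type*} (𝒯 : ι → LTree α) (X : ι → Finset α) : Prop :=
  CompatibleFamO fun i => remove (𝒯 i) (X i)

/-- `X'` is a label-disagreement for the family `𝒯`. -/
def IsLabelDisagreement {ι : Type*} (𝒯 : ι → LTree α) (X' : Finset α) : Prop :=
  CompatibleFamO fun i => remove (𝒯 i) X'

/-- `MASTRL 𝒯`: the minimum size of a leaf-disagreement for `𝒯`. -/
noncomputable def MASTRL {t : ℕ} (𝒯 : Fin t → LTree α) : ℕ :=
  sInf {v | ∃ X : Fin t → Finset α, (∀ i, X i ⊆ labels (𝒯 i)) ∧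
    (∑ i, (X i).card) = v ∧ IsLeafDisagreement 𝒯 X}

/-- The triplet `ab|c` (as a tree). -/
def tripletTree (a b c : α) : LTree α := node (node (leaf a) (leaf b)) (leaf c)

/-- A rooted triplet: a tree with exactly three (distinctly labeled) leaves. -/
def IsTriplet (R : LTree α) : Prop := Good R ∧ (labels R).card = 3

/-- `ab|c` is a triplet of `T`, i.e. `T|_{a,b,c} = ab|c`. -/
def IsTripletOf (T : LTree α) (a b c : α) : Prop :=
  OptIso (restrict T {a, b, c}) (some (tripletTree a b c))

/-- `tr(T)`: the triplet decomposition of `T`. -/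
def trSet (T : LTree α) : Set (LTree α) :=
  {R | ∃ a b c : α, R = tripletTree a b c ∧ IsTripletOf T a b c}

/-- A set of trees is compatible: some tree on the union of the label sets
displays every member. -/
def CompatibleSet (S : Set (LTree α)) : Prop :=
  ∃ TO : Option (LTree α), GoodO TO ∧
    (↑(labelsO TO) : Set α) = (⋃ R ∈ S, ↑(labels R)) ∧
    ∀ R ∈ S, OptIso (restrictO TO (labels R)) (some R)

/-- `MINRTI ℛ`: the minimum number of triplets to delete from `ℛ` so that the
remaining triplets are compatible. -/
noncomputable def MINRTI {t : ℕ} (R : Fin t → LTree α) : ℕ :=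
  sInf {m | ∃ s : Finset (Fin t), s.card = m ∧
    CompatibleFam (fun i : {i : Fin t // i ∉ s} => R i.1)}

/-- Graft the leaf `x` at the position (edge) addressed by `p` in `T`.
The empty address grafts `x` above the root of `T` (the `⊥` case); the address
of an internal/leaf vertex `v` grafts `x` on the edge between `v` and its
parent.  `none` when the address is invalid. -/
def graftAt (x : α) : LTree α → List Bool → Option (LTree α)
  | T, [] => some (node (leaf x) T)
  | leaf _, _ :: _ => none
  | node l r, b :: p =>
    if b then (graftAt x l p).map (fun l' => node l' r)
    else (graftAt x r p).map (fun r' => node l r')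

/-- `T'` is obtained from `T` by a single LPR (leaf prune-and-regraft) move on
the leaf `x`: prune `x` from `T` and regraft it, either on an edge of
`T − {x}` or above its root. -/
def LPRStep (x : α) (T T' : LTree α) : Prop :=
  (remove T {x} = none ∧ T' = leaf x) ∨
  ∃ T₀ p, remove T {x} = some T₀ ∧ graftAt x T₀ p = some T'

/-- `TurnsInto L T T'`: the LPR sequence with (ordered) leaf list `L` turns
`T` into `T'`. -/
inductive TurnsInto : List α → LTree α → LTree α → Prop
  | nil {T T' : LTree α} : Iso T T' → TurnsInto [] T T'
  | cons {x : α} {xs : List α} {T T'' T' : LTree α} :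
      LPRStep x T T'' → TurnsInto xs T'' T' → TurnsInto (x :: xs) T T'

/-- `confset(T₁,T₂)`: the collection of 3-label sets `{a,b,c}` such that
`T₁` contains a triplet on `{a,b,c}` conflicting with a triplet of `T₂`. -/
def confset (T₁ T₂ : LTree α) : Set (Finset α) :=
  {s | ∃ a b c : α, s = {a, b, c} ∧ IsTripletOf T₁ a b c ∧
    (IsTripletOf T₂ a c b ∨ IsTripletOf T₂ b c a)}

/-- `X` is a minimal disagreement between `T₁` and `T₂`. -/
def MinimalDisagreement (T₁ T₂ : LTree α) (X : Finset α) : Prop :=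
  X ⊆ labels T₁ ∪ labels T₂ ∧
  OptIso (remove T₁ X) (remove T₂ X) ∧
  ∀ X' ⊂ X, ¬ OptIso (remove T₁ X') (remove T₂ X')

/-- `u` is (the rooted subtree hanging at) a node of `T`. -/
inductive IsSubtree : LTree α → LTree α → Prop
  | refl (T : LTree α) : IsSubtree T T
  | left {u l r : LTree α} : IsSubtree u l → IsSubtree u (node l r)
  | right {u l r : LTree α} : IsSubtree u r → IsSubtree u (node l r)

/-- `u` is the least common ancestor in `T` of the labels in `Z`. -/
def IsLCA (T : LTree α) (Z : Finset α) (u : LTree α) : Prop :=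
  IsSubtree u T ∧ Z ⊆ labels u ∧
    ∀ w, IsSubtree w T → Z ⊆ labels w → IsSubtree u w

end LTree


set_option linter.unusedSectionVars false

namespace LTree

variable {α : Type u} [DecidableEq α]

theorem labels_nonempty : ∀ T : LTree α, (labels T).Nonempty
  | leaf a => ⟨a, by simp [labels]⟩
  | node l r => by
      obtain ⟨y, hy⟩ := labels_nonempty l
      exact ⟨y, by simp [labels, hy]⟩

theorem iso_labels {a b : LTree α} (h : Iso a b) : labels a = labels b := by
  induction h with
  | leaf => rfl
  | node _ _ ih₁ ih₂ => simp [labels, ih₁, ih₂]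
  | swap _ _ ih₁ ih₂ => simp [labels, ih₁, ih₂, Finset.union_comm]

theorem iso_refl (T : LTree α) : Iso T T := by
  induction T with
  | leaf a => exact .leaf a
  | node l r ih₁ ih₂ => exact .node ih₁ ih₂

theorem iso_symm {a b : LTree α} (h : Iso a b) : Iso b a := by
  induction h with
  | leaf a => exact .leaf a
  | node _ _ ih₁ ih₂ => exact .node ih₁ ih₂
  | swap _ _ ih₁ ih₂ => exact .swap ih₂ ih₁

theorem iso_trans {a b c : LTree α} (hab : Iso a b) (hbc : Iso b c) : Iso a c := by
  induction hab generalizing c with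
  | leaf a => exact hbc
  | node h₁ h₂ ih₁ ih₂ =>
      cases hbc with
      | node g₁ g₂ => exact .node (ih₁ g₁) (ih₂ g₂)
      | swap g₁ g₂ => exact .swap (ih₁ g₁) (ih₂ g₂)
  | swap h₁ h₂ ih₁ ih₂ =>
      cases hbc with
      | node g₁ g₂ => exact .swap (ih₁ g₂) (ih₂ g₁)
      | swap g₁ g₂ => exact .node (ih₁ g₂) (ih₂ g₁)

@[simp] theorem optIso_some_some {a b : LTree α} : OptIso (some a) (some b) ↔ Iso a b :=
  Iff.rfl

@[simp] theorem optIso_none_none : OptIso (none : Option (LTree α)) none := trivial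

@[simp] theorem optIso_none_some {b : LTree α} : ¬ OptIso (none : Option (LTree α)) (some b) :=
  fun h => h

@[simp] theorem optIso_some_none {b : LTree α} : ¬ OptIso (some b) (none : Option (LTree α)) :=
  fun h => h

theorem optIso_refl : ∀ o : Option (LTree α), OptIso o o
  | none => trivial
  | some t => iso_refl t

theorem optIso_symm {o₁ o₂ : Option (LTree α)} (h : OptIso o₁ o₂) : OptIso o₂ o₁ := by
  cases o₁ <;> cases o₂ <;> simp_all
  exact iso_symm h

theorem optIso_trans {o₁ o₂ o₃ : Option (LTree α)} (h : OptIso o₁ o₂) (h' : OptIso o₂ o₃) :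
    OptIso o₁ o₃ := by
  cases o₁ <;> cases o₂ <;> cases o₃ <;> simp_all
  exact iso_trans h h'

theorem labelsO_restrict : ∀ (T : LTree α) (S : Finset α), labelsO (restrict T S) = labels T ∩ S
  | leaf a, S => by
      by_cases ha : a ∈ S <;>
        simp [restrict, ha, labelsO, labels, Finset.singleton_inter_of_mem,
          Finset.singleton_inter_of_notMem]
  | node l r, S => by
      have hl := labelsO_restrict l S
      have hr := labelsO_restrict r S
      rcases h1 : restrict l S with _ | l' <;> rcases h2 : restrict r S with _ | r' <;>
          rw [h1] at hl <;> rw [h2] at hr <;>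
          simp only [labelsO] at hl hr <;>
          simp [restrict, h1, h2, labelsO, labels, Finset.union_inter_distrib_right, ← hl, ← hr]

theorem labels_restrict {T : LTree α} {S : Finset α} {u : LTree α} (h : restrict T S = some u) :
    labels u = labels T ∩ S := by
  have := labelsO_restrict T S
  rw [h] at this
  simpa [labelsO] using this

theorem restrict_eq_none_iff {T : LTree α} {S : Finset α} :
    restrict T S = none ↔ labels T ∩ S = ∅ := by
  constructor
  · intro h
    have := labelsO_restrict T S
    rw [h] at this
    simpa [labelsO] using this.symm
  · intro h
    rcases hu : restrict T S with _ | u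
    · rfl
    · exfalso
      have := labels_restrict hu
      rw [h] at this
      exact absurd this (Finset.nonempty_iff_ne_empty.mp (labels_nonempty u))

theorem restrict_isSome {T : LTree α} {S : Finset α} (h : (labels T ∩ S).Nonempty) :
    ∃ u, restrict T S = some u := by
  rcases hu : restrict T S with _ | u
  · rw [restrict_eq_none_iff.mp hu] at h
    exact absurd h (by simp)
  · exact ⟨u, rfl⟩

end LTree

namespace LTree

variable {α : Type u} [DecidableEq α]

theorem good_restrict : ∀ {T : LTree α}, Good T → ∀ {S : Finset α} {u : LTree α},
    restrict T S = some u → Good u := by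
  intro T
  induction T with
  | leaf a =>
      intro _ S u h
      by_cases ha : a ∈ S <;> simp [restrict, ha] at h
      subst h; trivial
  | node l r ihl ihr =>
      intro hg S u h
      obtain ⟨gl, gr, hdisj⟩ := hg
      rcases h1 : restrict l S with _ | l' <;> rcases h2 : restrict r S with _ | r' <;>
        simp [restrict, h1, h2] at h
      · subst h; exact ihr gr h2
      · subst h; exact ihl gl h1
      · subst h
        refine ⟨ihl gl h1, ihr gr h2, ?_⟩
        rw [labels_restrict h1, labels_restrict h2]
        exact hdisj.mono Finset.inter_subset_left Finset.inter_subset_left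

theorem restrict_congr : ∀ (T : LTree α) {S S' : Finset α},
    labels T ∩ S = labels T ∩ S' → restrict T S = restrict T S' := by
  intro T
  induction T with
  | leaf a =>
      intro S S' h
      simp only [labels] at h
      have := Finset.ext_iff.mp h a
      simp at this
      by_cases ha : a ∈ S
      · simp [restrict, ha, this.mp ha]
      · have ha' : a ∉ S' := fun hc => ha (this.mpr hc)
        simp [restrict, ha, ha']
  | node l r ihl ihr =>
      intro S S' h
      have hl : labels l ∩ S = labels l ∩ S' := by
        ext y
        have := Finset.ext_iff.mp h y
        simp [labels] at this ⊢
        tauto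
      have hr : labels r ∩ S = labels r ∩ S' := by
        ext y
        have := Finset.ext_iff.mp h y
        simp [labels] at this ⊢
        tauto
      simp [restrict, ihl hl, ihr hr]

theorem restrict_insert_of_not_mem {T : LTree α} {S : Finset α} {x : α} (hx : x ∉ labels T) :
    restrict T (insert x S) = restrict T S := by
  apply restrict_congr
  ext y
  simp only [Finset.mem_inter, Finset.mem_insert]
  constructor
  · rintro ⟨hy, rfl | h⟩
    · exact absurd hy hx
    · exact ⟨hy, h⟩
  · rintro ⟨hy, h⟩
    exact ⟨hy, Or.inr h⟩

theorem restrict_of_subset : ∀ {T : LTree α} {S : Finset α}, labels T ⊆ S → restrict T S = some T := by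
  intro T
  induction T with
  | leaf a =>
      intro S h
      have : a ∈ S := h (by simp [labels])
      simp [restrict, this]
  | node l r ihl ihr =>
      intro S h
      simp only [labels, Finset.union_subset_iff] at h
      simp [restrict, ihl h.1, ihr h.2]

theorem restrictO_restrict : ∀ (T : LTree α) (S S' : Finset α),
    restrictO (restrict T S) S' = restrict T (S ∩ S')
  | leaf a, S, S' => by
      by_cases ha : a ∈ S <;> by_cases ha' : a ∈ S' <;>
        simp [restrict, restrictO, ha, ha']
  | node l r, S, S' => by
      have hl := restrictO_restrict l S S'
      have hr := restrictO_restrict r S S'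
      rcases h1 : restrict l S with _ | l' <;> rcases h2 : restrict r S with _ | r'
      · rw [h1] at hl; rw [h2] at hr
        simp only [restrictO] at hl hr
        simp [restrict, restrictO, h1, h2, ← hl, ← hr]
      · rw [h1] at hl; rw [h2] at hr
        simp only [restrictO] at hl hr
        rcases h4 : restrict r' S' with _ | r'' <;> rw [h4] at hr <;>
          simp [restrict, restrictO, h1, h2, ← hl, ← hr, h4]
      · rw [h1] at hl; rw [h2] at hr
        simp only [restrictO] at hl hr
        rcases h3 : restrict l' S' with _ | l'' <;> rw [h3] at hl <;>
          simp [restrict, restrictO, h1, h2, ← hl, ← hr, h3]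
      · rw [h1] at hl; rw [h2] at hr
        simp only [restrictO] at hl hr
        rcases h3 : restrict l' S' with _ | l'' <;> rw [h3] at hl <;>
          rcases h4 : restrict r' S' with _ | r'' <;> rw [h4] at hr <;>
          simp [restrict, restrictO, h1, h2, ← hl, ← hr, h3, h4]

theorem optIso_elim {o₁ o₂ : Option (LTree α)} (h : OptIso o₁ o₂) :
    (o₁ = none ∧ o₂ = none) ∨ ∃ a b, o₁ = some a ∧ o₂ = some b ∧ Iso a b := by
  cases o₁ <;> cases o₂ <;> simp_all

theorem iso_restrict {a b : LTree α} (h : Iso a b) (S : Finset α) :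
    OptIso (restrict a S) (restrict b S) := by
  induction h with
  | leaf a =>
      by_cases ha : a ∈ S <;> simp [restrict, ha, iso_refl]
  | node h₁ h₂ ih₁ ih₂ =>
      rcases optIso_elim ih₁ with ⟨e1, e2⟩ | ⟨u₁, u₂, e1, e2, hu⟩ <;>
        rcases optIso_elim ih₂ with ⟨e3, e4⟩ | ⟨v₁, v₂, e3, e4, hv⟩ <;>
        simp [restrict, e1, e2, e3, e4] <;>
        first
          | exact hu
          | exact hv
          | exact Iso.node hu hv
  | swap h₁ h₂ ih₁ ih₂ =>
      rcases optIso_elim ih₁ with ⟨e1, e2⟩ | ⟨u₁, u₂, e1, e2, hu⟩ <;>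
        rcases optIso_elim ih₂ with ⟨e3, e4⟩ | ⟨v₁, v₂, e3, e4, hv⟩ <;>
        simp [restrict, e1, e2, e3, e4] <;>
        first
          | exact hu
          | exact hv
          | exact Iso.swap hu hv

theorem optIso_restrictO {o₁ o₂ : Option (LTree α)} (h : OptIso o₁ o₂) (S : Finset α) :
    OptIso (restrictO o₁ S) (restrictO o₂ S) := by
  rcases optIso_elim h with ⟨e1, e2⟩ | ⟨a, b, e1, e2, hab⟩
  · subst e1; subst e2; trivial
  · subst e1; subst e2
    exact iso_restrict hab S

end LTree

namespace LTree

variable {α : Type u} [DecidableEq α]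

theorem labels_graft : ∀ {T : LTree α} {x : α} {p : List Bool} {G : LTree α},
    graftAt x T p = some G → labels G = insert x (labels T) := by
  intro T x p
  induction T generalizing p with
  | leaf a =>
      intro G h
      cases p with
      | nil => simp [graftAt] at h; subst h; simp [labels]
      | cons b p' => simp [graftAt] at h
  | node l r ihl ihr =>
      intro G h
      cases p with
      | nil => simp [graftAt] at h; subst h; simp [labels]
      | cons b p' =>
          cases b <;> simp [graftAt, Option.map_eq_some_iff] at h
          · obtain ⟨r', hr', rfl⟩ := h
            simp [labels, ihr hr', Finset.union_insert]
          · obtain ⟨l', hl', rfl⟩ := h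
            simp [labels, ihl hl', Finset.insert_union]

theorem good_graft : ∀ {T : LTree α} {x : α} {p : List Bool} {G : LTree α},
    Good T → x ∉ labels T → graftAt x T p = some G → Good G := by
  intro T x p
  induction T generalizing p with
  | leaf a =>
      intro G hg hx h
      cases p with
      | nil =>
          simp [graftAt] at h; subst h
          exact ⟨trivial, trivial, by simp [labels] at hx ⊢; exact fun hc => hx hc⟩
      | cons b p' => simp [graftAt] at h
  | node l r ihl ihr =>
      intro G hg hx h
      obtain ⟨gl, gr, hdisj⟩ := hg
      simp [labels] at hx
      cases p with
      | nil =>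
          simp [graftAt] at h; subst h
          refine ⟨trivial, ⟨gl, gr, hdisj⟩, ?_⟩
          simp [labels]
          exact ⟨hx.1, hx.2⟩
      | cons b p' =>
          cases b <;> simp [graftAt, Option.map_eq_some_iff] at h
          · obtain ⟨r', hr', rfl⟩ := h
            refine ⟨gl, ihr gr hx.2 hr', ?_⟩
            rw [labels_graft hr']
            simp [Finset.disjoint_insert_right, hx.1, hdisj]
          · obtain ⟨l', hl', rfl⟩ := h
            refine ⟨ihl gl hx.1 hl', gr, ?_⟩
            rw [labels_graft hl']
            simp [Finset.disjoint_insert_left, hx.2, hdisj]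

theorem restrict_graft_not_mem : ∀ {T : LTree α} {x : α} {p : List Bool} {G : LTree α},
    graftAt x T p = some G → ∀ {S : Finset α}, x ∉ S → restrict G S = restrict T S := by
  intro T x p
  induction T generalizing p with
  | leaf a =>
      intro G h S hxS
      cases p with
      | nil =>
          simp [graftAt] at h; subst h
          simp [restrict, hxS]
          by_cases ha : a ∈ S <;> simp [ha]
      | cons b p' => simp [graftAt] at h
  | node l r ihl ihr =>
      intro G h S hxS
      cases p with
      | nil =>
          simp [graftAt] at h; subst h
          rcases h1 : restrict l S with _ | l' <;> rcases h2 : restrict r S with _ | r' <;>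
            simp [restrict, hxS, h1, h2]
      | cons b p' =>
          cases b <;> simp [graftAt, Option.map_eq_some_iff] at h
          · obtain ⟨r', hr', rfl⟩ := h
            simp [restrict, ihr hr' hxS]
          · obtain ⟨l', hl', rfl⟩ := h
            simp [restrict, ihl hl' hxS]

theorem eq_leaf_of_labels_singleton : ∀ {T : LTree α}, Good T → ∀ {x : α},
    labels T = {x} → T = leaf x := by
  intro T
  cases T with
  | leaf a =>
      intro _ x h
      simp [labels] at h
      subst h; rfl
  | node l r =>
      intro hg x h
      exfalso
      obtain ⟨_, _, hdisj⟩ := hg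
      obtain ⟨y, hy⟩ := labels_nonempty l
      obtain ⟨z, hz⟩ := labels_nonempty r
      have hy' : y ∈ labels (node l r) := by simp [labels, hy]
      have hz' : z ∈ labels (node l r) := by simp [labels, hz]
      rw [h] at hy' hz'
      simp at hy' hz'
      subst hy'; subst hz'
      exact Finset.disjoint_left.mp hdisj hy hz

end LTree

namespace LTree

variable {α : Type u} [DecidableEq α]

/-- All valid graft addresses of a tree. -/
def addrF : LTree α → Finset (List Bool)
  | leaf _ => {[]}
  | node l r =>
      insert [] ((addrF l).image (List.cons true) ∪ (addrF r).image (List.cons false))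

/-- Number of labels (size) of a tree. -/
def sz (T : LTree α) : ℕ := (labels T).card

theorem sz_pos (T : LTree α) : 1 ≤ sz T := Finset.card_pos.mpr (labels_nonempty T)

theorem sz_node {l r : LTree α} (h : Disjoint (labels l) (labels r)) :
    sz (node l r) = sz l + sz r := by
  simp [sz, labels, Finset.card_union_of_disjoint h]

theorem graft_isSome_of_mem_addrF {x : α} : ∀ {T : LTree α} {p : List Bool},
    p ∈ addrF T → ∃ G, graftAt x T p = some G := by
  intro T
  induction T with
  | leaf a =>
      intro p hp
      simp [addrF] at hp
      subst hp
      exact ⟨_, rfl⟩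
  | node l r ihl ihr =>
      intro p hp
      simp [addrF] at hp
      rcases hp with rfl | ⟨q, hq, rfl⟩ | ⟨q, hq, rfl⟩
      · exact ⟨_, rfl⟩
      · obtain ⟨G, hG⟩ := ihl hq
        exact ⟨node G r, by simp [graftAt, hG]⟩
      · obtain ⟨G, hG⟩ := ihr hq
        exact ⟨node l G, by simp [graftAt, hG]⟩

theorem mem_addrF_of_graft {x : α} : ∀ {T : LTree α} {p : List Bool} {G : LTree α},
    graftAt x T p = some G → p ∈ addrF T := by
  intro T
  induction T with
  | leaf a =>
      intro p G h
      cases p with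
      | nil => simp [addrF]
      | cons b p' => simp [graftAt] at h
  | node l r ihl ihr =>
      intro p G h
      cases p with
      | nil => simp [addrF]
      | cons b p' =>
          cases b <;> simp [graftAt, Option.map_eq_some_iff] at h
          · obtain ⟨r', hr', rfl⟩ := h
            exact Finset.mem_insert_of_mem (Finset.mem_union_right _
              (Finset.mem_image_of_mem _ (ihr hr')))
          · obtain ⟨l', hl', rfl⟩ := h
            exact Finset.mem_insert_of_mem (Finset.mem_union_left _
              (Finset.mem_image_of_mem _ (ihl hl')))

theorem card_addrF_le : ∀ {T : LTree α}, Good T → (addrF T).card + 1 ≤ 2 * sz T := by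
  intro T
  induction T with
  | leaf a => intro _; simp [addrF, sz, labels]
  | node l r ihl ihr =>
      intro hg
      obtain ⟨gl, gr, hdisj⟩ := hg
      have h0 := Finset.card_insert_le ([] : List Bool)
        ((addrF l).image (List.cons true) ∪ (addrF r).image (List.cons false))
      have h1 := Finset.card_union_le ((addrF l).image (List.cons true))
        ((addrF r).image (List.cons false))
      have h2 := Finset.card_image_le (s := addrF l) (f := List.cons true)
      have h3 := Finset.card_image_le (s := addrF r) (f := List.cons false)
      have h4 := ihl gl
      have h5 := ihr gr
      have h6 : sz (node l r) = sz l + sz r := sz_node hdisj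
      show (addrF (node l r)).card + 1 ≤ 2 * sz (node l r)
      simp only [addrF] at h0 ⊢
      omega

/-- The minimum number of leaves of `T` that must be removed so that grafting a new
leaf at address `p` and at address `q` give the same tree. -/
def cost : LTree α → List Bool → List Bool → ℕ
  | _, [], [] => 0
  | leaf _, _, _ => 0
  | node l r, [], true :: q => min (sz l) (sz r + cost l [] q)
  | node l r, [], false :: q => min (sz r) (sz l + cost r [] q)
  | node l r, true :: p, [] => min (sz l) (sz r + cost l p [])
  | node l r, false :: p, [] => min (sz r) (sz l + cost r p [])
  | node l r, true :: p, true :: q => min (sz l) (cost l p q)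
  | node l r, false :: p, false :: q => min (sz r) (cost r p q)
  | node l r, true :: p, false :: q => min (sz l + cost r [] q) (sz r + cost l [] p)
  | node l r, false :: p, true :: q => min (sz r + cost l [] q) (sz l + cost r [] p)

theorem cost_comm : ∀ (T : LTree α) (p q : List Bool), cost T p q = cost T q p := by
  intro T
  induction T with
  | leaf a =>
      intro p q
      cases p <;> cases q <;> rfl
  | node l r ihl ihr =>
      intro p q
      rcases p with _ | ⟨b, p⟩ <;> rcases q with _ | ⟨c, q⟩
      · rfl
      · cases c <;> simp [cost, ihl, ihr]
      · cases b <;> simp [cost, ihl, ihr]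
      · cases b <;> cases c <;> simp [cost, ihl, ihr, Nat.min_comm]

theorem cost_le_sz : ∀ (T : LTree α), Good T → ∀ (p q : List Bool), cost T p q ≤ sz T := by
  intro T
  induction T with
  | leaf a => intro _ p q; cases p <;> cases q <;> simp [cost, sz, labels]
  | node l r ihl ihr =>
      intro hg p q
      obtain ⟨gl, gr, hdisj⟩ := hg
      have hl := ihl gl
      have hr := ihr gr
      have hszl := sz_pos l
      have hszr := sz_pos r
      rw [sz_node hdisj]
      rcases p with _ | ⟨b, p⟩ <;> rcases q with _ | ⟨c, q⟩
      · simp [cost]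
      · cases c <;> simp [cost] <;> omega
      · cases b <;> simp [cost] <;> omega
      · have A := hl p q
        have B := hl ([] : List Bool) p
        have C := hl ([] : List Bool) q
        have D := hr p q
        have E := hr ([] : List Bool) p
        have F := hr ([] : List Bool) q
        cases b <;> cases c <;> simp [cost] <;> omega

end LTree

namespace LTree

variable {α : Type u} [DecidableEq α]

theorem card_filter_addr_node (l r : LTree α) (P : List Bool → Prop) [DecidablePred P] :
    ((addrF (node l r)).filter P).card ≤
      1 + ((addrF l).filter (fun q => P (true :: q))).card
        + ((addrF r).filter (fun q => P (false :: q))).card := by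
  have hsub : (addrF (node l r)).filter P ⊆
      insert [] (((addrF l).filter (fun q => P (true :: q))).image (List.cons true) ∪
        ((addrF r).filter (fun q => P (false :: q))).image (List.cons false)) := by
    intro q hq
    simp only [addrF, Finset.mem_filter, Finset.mem_insert, Finset.mem_union,
      Finset.mem_image] at hq ⊢
    rcases hq with ⟨rfl | ⟨⟨q', hq', rfl⟩ | ⟨q', hq', rfl⟩⟩, hP⟩
    · exact Or.inl rfl
    · exact Or.inr (Or.inl ⟨q', ⟨hq', hP⟩, rfl⟩)
    · exact Or.inr (Or.inr ⟨q', ⟨hq', hP⟩, rfl⟩)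
  have h1 := Finset.card_le_card hsub
  have h2 := Finset.card_insert_le ([] : List Bool)
      (((addrF l).filter (fun q => P (true :: q))).image (List.cons true) ∪
        ((addrF r).filter (fun q => P (false :: q))).image (List.cons false))
  have h3 := Finset.card_union_le (((addrF l).filter (fun q => P (true :: q))).image (List.cons true))
      (((addrF r).filter (fun q => P (false :: q))).image (List.cons false))
  have h4 := Finset.card_image_le (s := (addrF l).filter (fun q => P (true :: q))) (f := List.cons true)
  have h5 := Finset.card_image_le (s := (addrF r).filter (fun q => P (false :: q))) (f := List.cons false)
  omega

theorem countRoot_card_le : ∀ (T : LTree α), Good T → ∀ (m : ℕ),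
    ((addrF T).filter (fun q => cost T [] q ≤ m)).card ≤ 4 * m + 1 := by
  intro T
  induction T with
  | leaf a =>
      intro _ m
      exact le_trans (Finset.card_filter_le _ _) (by simp [addrF])
  | node l r ihl ihr =>
      intro hg m
      obtain ⟨gl, gr, hdisj⟩ := hg
      have key := card_filter_addr_node l r (fun q => cost (node l r) [] q ≤ m)
      have hszl := sz_pos l
      have hszr := sz_pos r
      -- left bound
      have hL : ((addrF l).filter (fun q => cost (node l r) [] (true :: q) ≤ m)).card
          ≤ if sz l ≤ m then 2 * sz l - 1 else (if sz r ≤ m then 4 * (m - sz r) + 1 else 0) := by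
        by_cases h1 : sz l ≤ m
        · simp only [if_pos h1]
          have := Finset.card_filter_le (addrF l) (fun q => cost (node l r) [] (true :: q) ≤ m)
          have h2 := card_addrF_le gl
          omega
        · simp only [if_neg h1]
          by_cases h2 : sz r ≤ m
          · simp only [if_pos h2]
            have hsub : (addrF l).filter (fun q => cost (node l r) [] (true :: q) ≤ m) ⊆
                (addrF l).filter (fun q => cost l [] q ≤ m - sz r) := by
              intro q hq
              rw [Finset.mem_filter] at hq ⊢
              simp only [cost] at hq ⊢
              refine ⟨hq.1, ?_⟩
              have := hq.2
              omega
            exact le_trans (Finset.card_le_card hsub) (ihl gl (m - sz r))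
          · simp only [if_neg h2]
            have hempty : (addrF l).filter (fun q => cost (node l r) [] (true :: q) ≤ m) = ∅ := by
              apply Finset.filter_eq_empty_iff.mpr
              intro q _
              simp only [cost]
              omega
            simp [hempty]
      have hR : ((addrF r).filter (fun q => cost (node l r) [] (false :: q) ≤ m)).card
          ≤ if sz r ≤ m then 2 * sz r - 1 else (if sz l ≤ m then 4 * (m - sz l) + 1 else 0) := by
        by_cases h1 : sz r ≤ m
        · simp only [if_pos h1]
          have := Finset.card_filter_le (addrF r) (fun q => cost (node l r) [] (false :: q) ≤ m)
          have h2 := card_addrF_le gr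
          omega
        · simp only [if_neg h1]
          by_cases h2 : sz l ≤ m
          · simp only [if_pos h2]
            have hsub : (addrF r).filter (fun q => cost (node l r) [] (false :: q) ≤ m) ⊆
                (addrF r).filter (fun q => cost r [] q ≤ m - sz l) := by
              intro q hq
              rw [Finset.mem_filter] at hq ⊢
              simp only [cost] at hq ⊢
              refine ⟨hq.1, ?_⟩
              have := hq.2
              omega
            exact le_trans (Finset.card_le_card hsub) (ihr gr (m - sz l))
          · simp only [if_neg h2]
            have hempty : (addrF r).filter (fun q => cost (node l r) [] (false :: q) ≤ m) = ∅ := by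
              apply Finset.filter_eq_empty_iff.mpr
              intro q _
              simp only [cost]
              omega
            simp [hempty]
      by_cases h1 : sz l ≤ m <;> by_cases h2 : sz r ≤ m <;>
        simp only [h1, h2, if_pos, if_neg, if_true, if_false] at hL hR <;> omega

end LTree

namespace LTree

variable {α : Type u} [DecidableEq α]

theorem card_filter_addr_node' (l r : LTree α) (P : List Bool → Prop) [DecidablePred P]
    (h0 : ¬ P []) :
    ((addrF (node l r)).filter P).card ≤
      ((addrF l).filter (fun q => P (true :: q))).card
        + ((addrF r).filter (fun q => P (false :: q))).card := by
  have hsub : (addrF (node l r)).filter P ⊆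
      (((addrF l).filter (fun q => P (true :: q))).image (List.cons true) ∪
        ((addrF r).filter (fun q => P (false :: q))).image (List.cons false)) := by
    intro q hq
    simp only [addrF, Finset.mem_filter, Finset.mem_insert, Finset.mem_union,
      Finset.mem_image] at hq ⊢
    rcases hq with ⟨rfl | ⟨⟨q', hq', rfl⟩ | ⟨q', hq', rfl⟩⟩, hP⟩
    · exact absurd hP h0
    · exact Or.inl ⟨q', ⟨hq', hP⟩, rfl⟩
    · exact Or.inr ⟨q', ⟨hq', hP⟩, rfl⟩
  have h1 := Finset.card_le_card hsub
  have h3 := Finset.card_union_le (((addrF l).filter (fun q => P (true :: q))).image (List.cons true))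
      (((addrF r).filter (fun q => P (false :: q))).image (List.cons false))
  have h4 := Finset.card_image_le (s := (addrF l).filter (fun q => P (true :: q))) (f := List.cons true)
  have h5 := Finset.card_image_le (s := (addrF r).filter (fun q => P (false :: q))) (f := List.cons false)
  omega

theorem count_card_le : ∀ (T : LTree α), Good T → ∀ (p : List Bool) (m : ℕ),
    ((addrF T).filter (fun q => cost T p q ≤ m)).card
      ≤ 5 * m + 3 + 2 * min (cost T p []) m := by
  intro T
  induction T with
  | leaf a =>
      intro _ p m
      have h1 : ((addrF (leaf a)).filter (fun q => cost (leaf a) p q ≤ m)).card ≤ 1 := by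
        exact le_trans (Finset.card_filter_le _ _) (by simp [addrF])
      omega
  | node l r ihl ihr =>
      intro hg p m
      obtain ⟨gl, gr, hdisj⟩ := hg
      rcases p with _ | ⟨b, p'⟩
      · -- p = [] : use countRoot
        have h := countRoot_card_le (node l r) ⟨gl, gr, hdisj⟩ m
        omega
      cases b
      · -- b = false : path goes into r ; own side r, sibling l
        have hszl := sz_pos l
        have hszr := sz_pos r
        have hC := cost_comm r p' []
        -- own-side bound (q = false :: q')
        have hR : ((addrF r).filter (fun q => cost (node l r) (false :: p') (false :: q) ≤ m)).card
            ≤ if sz r ≤ m then 2 * sz r - 1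
              else 5 * m + 3 + 2 * min (cost r p' []) m := by
          by_cases h1 : sz r ≤ m
          · simp only [if_pos h1]
            have := Finset.card_filter_le (addrF r)
              (fun q => cost (node l r) (false :: p') (false :: q) ≤ m)
            have h2 := card_addrF_le gr
            omega
          · simp only [if_neg h1]
            have hsub : (addrF r).filter (fun q => cost (node l r) (false :: p') (false :: q) ≤ m)
                ⊆ (addrF r).filter (fun q => cost r p' q ≤ m) := by
              intro q hq
              rw [Finset.mem_filter] at hq ⊢
              simp only [cost] at hq ⊢
              exact ⟨hq.1, by have := hq.2; omega⟩
            exact le_trans (Finset.card_le_card hsub) (ihr gr p' m)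
        -- sibling-side bound (q = true :: q')
        have hL : ((addrF l).filter (fun q => cost (node l r) (false :: p') (true :: q) ≤ m)).card
            ≤ if sz l + cost r [] p' ≤ m then 2 * sz l - 1
              else (if sz r ≤ m then 4 * (m - sz r) + 1 else 0) := by
          by_cases h1 : sz l + cost r [] p' ≤ m
          · simp only [if_pos h1]
            have := Finset.card_filter_le (addrF l)
              (fun q => cost (node l r) (false :: p') (true :: q) ≤ m)
            have h2 := card_addrF_le gl
            omega
          · simp only [if_neg h1]
            by_cases h2 : sz r ≤ m
            · simp only [if_pos h2]
              have hsub : (addrF l).filter (fun q => cost (node l r) (false :: p') (true :: q) ≤ m)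
                  ⊆ (addrF l).filter (fun q => cost l [] q ≤ m - sz r) := by
                intro q hq
                rw [Finset.mem_filter] at hq ⊢
                simp only [cost] at hq ⊢
                exact ⟨hq.1, by have := hq.2; omega⟩
              exact le_trans (Finset.card_le_card hsub) (countRoot_card_le l gl (m - sz r))
            · simp only [if_neg h2]
              have hempty : (addrF l).filter
                  (fun q => cost (node l r) (false :: p') (true :: q) ≤ m) = ∅ := by
                apply Finset.filter_eq_empty_iff.mpr
                intro q _
                simp only [cost]
                omega
              simp [hempty]
        -- gate
        by_cases hgate : cost (node l r) (false :: p') [] ≤ m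
        · have key : ((addrF (node l r)).filter (fun q => cost (node l r) (false :: p') q ≤ m)).card ≤
              1 + ((addrF l).filter (fun q => cost (node l r) (false :: p') (true :: q) ≤ m)).card
                + ((addrF r).filter (fun q => cost (node l r) (false :: p') (false :: q) ≤ m)).card :=
            card_filter_addr_node l r _
          simp only [cost] at hgate ⊢
          by_cases h1 : sz r ≤ m <;> by_cases h2 : sz l + cost r [] p' ≤ m <;>
            simp only [h1, h2, if_pos, if_neg, if_true, if_false] at hL hR <;> omega
        · have key : ((addrF (node l r)).filter (fun q => cost (node l r) (false :: p') q ≤ m)).card ≤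
              ((addrF l).filter (fun q => cost (node l r) (false :: p') (true :: q) ≤ m)).card
                + ((addrF r).filter (fun q => cost (node l r) (false :: p') (false :: q) ≤ m)).card :=
            card_filter_addr_node' l r _ hgate
          simp only [cost] at hgate ⊢
          by_cases h1 : sz r ≤ m <;> by_cases h2 : sz l + cost r [] p' ≤ m <;>
            simp only [h1, h2, if_pos, if_neg, if_true, if_false] at hL hR <;> omega
      · -- b = true : path goes into l ; own side l, sibling r
        have hszl := sz_pos l
        have hszr := sz_pos r
        have hC := cost_comm l p' []
        have hL : ((addrF l).filter (fun q => cost (node l r) (true :: p') (true :: q) ≤ m)).card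
            ≤ if sz l ≤ m then 2 * sz l - 1
              else 5 * m + 3 + 2 * min (cost l p' []) m := by
          by_cases h1 : sz l ≤ m
          · simp only [if_pos h1]
            have := Finset.card_filter_le (addrF l)
              (fun q => cost (node l r) (true :: p') (true :: q) ≤ m)
            have h2 := card_addrF_le gl
            omega
          · simp only [if_neg h1]
            have hsub : (addrF l).filter (fun q => cost (node l r) (true :: p') (true :: q) ≤ m)
                ⊆ (addrF l).filter (fun q => cost l p' q ≤ m) := by
              intro q hq
              rw [Finset.mem_filter] at hq ⊢
              simp only [cost] at hq ⊢
              exact ⟨hq.1, by have := hq.2; omega⟩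
            exact le_trans (Finset.card_le_card hsub) (ihl gl p' m)
        have hR : ((addrF r).filter (fun q => cost (node l r) (true :: p') (false :: q) ≤ m)).card
            ≤ if sz r + cost l [] p' ≤ m then 2 * sz r - 1
              else (if sz l ≤ m then 4 * (m - sz l) + 1 else 0) := by
          by_cases h1 : sz r + cost l [] p' ≤ m
          · simp only [if_pos h1]
            have := Finset.card_filter_le (addrF r)
              (fun q => cost (node l r) (true :: p') (false :: q) ≤ m)
            have h2 := card_addrF_le gr
            omega
          · simp only [if_neg h1]
            by_cases h2 : sz l ≤ m
            · simp only [if_pos h2]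
              have hsub : (addrF r).filter (fun q => cost (node l r) (true :: p') (false :: q) ≤ m)
                  ⊆ (addrF r).filter (fun q => cost r [] q ≤ m - sz l) := by
                intro q hq
                rw [Finset.mem_filter] at hq ⊢
                simp only [cost] at hq ⊢
                exact ⟨hq.1, by have := hq.2; omega⟩
              exact le_trans (Finset.card_le_card hsub) (countRoot_card_le r gr (m - sz l))
            · simp only [if_neg h2]
              have hempty : (addrF r).filter
                  (fun q => cost (node l r) (true :: p') (false :: q) ≤ m) = ∅ := by
                apply Finset.filter_eq_empty_iff.mpr
                intro q _
                simp only [cost]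
                omega
              simp [hempty]
        by_cases hgate : cost (node l r) (true :: p') [] ≤ m
        · have key : ((addrF (node l r)).filter (fun q => cost (node l r) (true :: p') q ≤ m)).card ≤
              1 + ((addrF l).filter (fun q => cost (node l r) (true :: p') (true :: q) ≤ m)).card
                + ((addrF r).filter (fun q => cost (node l r) (true :: p') (false :: q) ≤ m)).card :=
            card_filter_addr_node l r _
          simp only [cost] at hgate ⊢
          by_cases h1 : sz l ≤ m <;> by_cases h2 : sz r + cost l [] p' ≤ m <;>
            simp only [h1, h2, if_pos, if_neg, if_true, if_false] at hL hR <;> omega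
        · have key : ((addrF (node l r)).filter (fun q => cost (node l r) (true :: p') q ≤ m)).card ≤
              ((addrF l).filter (fun q => cost (node l r) (true :: p') (true :: q) ≤ m)).card
                + ((addrF r).filter (fun q => cost (node l r) (true :: p') (false :: q) ≤ m)).card :=
            card_filter_addr_node' l r _ hgate
          simp only [cost] at hgate ⊢
          by_cases h1 : sz l ≤ m <;> by_cases h2 : sz r + cost l [] p' ≤ m <;>
            simp only [h1, h2, if_pos, if_neg, if_true, if_false] at hL hR <;> omega

end LTree

namespace LTree

variable {α : Type u} [DecidableEq α]

theorem restrict_graft_insert {T : LTree α} {x : α} {p : List Bool} {G : LTree α}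
    (hG : graftAt x T p = some G) (S : Finset α) :
    ∃ g, restrict G (insert x S) = some g ∧ labels g = insert x (labels T ∩ S) := by
  have hlbl := labels_graft hG
  have hne : (labels G ∩ insert x S).Nonempty := ⟨x, by simp [hlbl]⟩
  obtain ⟨g, hg⟩ := restrict_isSome hne
  refine ⟨g, hg, ?_⟩
  rw [labels_restrict hg, hlbl]
  ext y
  simp only [Finset.mem_inter, Finset.mem_insert]
  tauto

theorem restrict_graft_insert_of_empty {T : LTree α} {x : α} {p : List Bool} {G : LTree α}
    (hgood : Good T) (hx : x ∉ labels T) (hG : graftAt x T p = some G) {S : Finset α}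
    (hS : labels T ∩ S = ∅) :
    restrict G (insert x S) = some (leaf x) := by
  obtain ⟨g, hg, hlbl⟩ := restrict_graft_insert hG S
  rw [hS] at hlbl
  have hleaf := eq_leaf_of_labels_singleton (good_restrict (good_graft hgood hx hG) hg)
    (x := x) (by simpa using hlbl)
  rw [hleaf] at hg
  exact hg

theorem restrict_rootgraft {T : LTree α} {x : α} {S : Finset α} (hx : x ∉ labels T)
    {u : LTree α} (hu : restrict T S = some u) :
    restrict (node (leaf x) T) (insert x S) = some (node (leaf x) u) := by
  have h1 : restrict (leaf x) (insert x S) = some (leaf x) := by simp [restrict]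
  have h2 : restrict T (insert x S) = some u := by
    rw [restrict_insert_of_not_mem hx]; exact hu
  simp [restrict, h1, h2]

theorem card_sdiff_node {l r : LTree α} (hdisj : Disjoint (labels l) (labels r)) (S : Finset α) :
    (labels (node l r) \ S).card = (labels l \ S).card + (labels r \ S).card := by
  have h1 : labels (node l r) \ S = (labels l \ S) ∪ (labels r \ S) := by
    simp [labels, Finset.union_sdiff_distrib]
  rw [h1, Finset.card_union_of_disjoint
    (hdisj.mono (Finset.sdiff_subset) (Finset.sdiff_subset))]

theorem card_sdiff_of_inter_empty {T : LTree α} {S : Finset α} (h : labels T ∩ S = ∅) :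
    (labels T \ S).card = sz T := by
  rw [Finset.sdiff_eq_self_iff_disjoint.mpr (Finset.disjoint_iff_inter_eq_empty.mpr h)]
  rfl

theorem card_sdiff_le_sz {T : LTree α} (S : Finset α) : (labels T \ S).card ≤ sz T :=
  Finset.card_le_card (Finset.sdiff_subset)

end LTree

namespace LTree

variable {α : Type u} [DecidableEq α]

theorem graft_nil {x : α} {T G : LTree α} (h : graftAt x T [] = some G) :
    G = node (leaf x) T := by
  simp only [graftAt, Option.some_inj] at h
  exact h.symm

theorem graft_cons_true {x : α} {l r G : LTree α} {p : List Bool}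
    (h : graftAt x (node l r) (true :: p) = some G) :
    ∃ lp, graftAt x l p = some lp ∧ G = node lp r := by
  simp only [graftAt] at h
  rcases he : graftAt x l p with _ | lp <;> rw [he] at h <;> simp at h
  exact ⟨lp, rfl, h.symm⟩

theorem graft_cons_false {x : α} {l r G : LTree α} {p : List Bool}
    (h : graftAt x (node l r) (false :: p) = some G) :
    ∃ rp, graftAt x r p = some rp ∧ G = node l rp := by
  simp only [graftAt] at h
  rcases he : graftAt x r p with _ | rp <;> rw [he] at h <;> simp at h
  exact ⟨rp, rfl, h.symm⟩

theorem cost_le_of_optIso :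
    ∀ (T : LTree α), Good T → ∀ {x : α}, x ∉ labels T →
    ∀ {p q : List Bool} {Gp Gq : LTree α},
      graftAt x T p = some Gp → graftAt x T q = some Gq →
    ∀ {S : Finset α}, x ∉ S →
      OptIso (restrict Gp (insert x S)) (restrict Gq (insert x S)) →
      cost T p q ≤ (labels T \ S).card := by
  intro T
  induction T with
  | leaf a =>
      intro _ x hx p q Gp Gq hGp hGq S hxS hiso
      cases p with
      | nil =>
          cases q with
          | nil => simp [cost]
          | cons c q' => simp [graftAt] at hGq
      | cons b p' => simp [graftAt] at hGp
  | node l r ihl ihr =>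
      intro hgood x hx p q Gp Gq hGp hGq S hxS hiso
      obtain ⟨gl, gr, hdisj⟩ := hgood
      have hxl : x ∉ labels l := fun h => hx (by simp [labels, h])
      have hxr : x ∉ labels r := fun h => hx (by simp [labels, h])
      have hresl : restrict l (insert x S) = restrict l S := restrict_insert_of_not_mem hxl
      have hresr : restrict r (insert x S) = restrict r S := restrict_insert_of_not_mem hxr
      have hcard := card_sdiff_node hdisj S
      have hcl := card_sdiff_le_sz (T := l) S
      have hcr := card_sdiff_le_sz (T := r) S
      rcases p with _ | ⟨b, p'⟩
      · -- p = [] : Gp = node (leaf x) (node l r)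
        obtain rfl := graft_nil hGp
        rcases q with _ | ⟨c, q'⟩
        · simp [cost]
        cases c
        · -- q = false :: q' : q inside r
          obtain ⟨rq, hrq, rfl⟩ := graft_cons_false hGq
          obtain ⟨gq, hgq, hgql⟩ := restrict_graft_insert hrq S
          rcases hR : restrict r S with _ | r₀
          · -- whole r deleted : min ≤ sz r = card (labels r \ S)
            have h1 := card_sdiff_of_inter_empty (restrict_eq_none_iff.mp hR)
            simp only [cost]
            omega
          · rcases hL : restrict l S with _ | l₀
            · -- Iso (node (leaf x) r₀) gq : root-instance IH on r
              have hGq' : restrict (node l rq) (insert x S) = some gq := by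
                simp [restrict, hresl, hL, hgq]
              have hGp' : restrict (node (leaf x) (node l r)) (insert x S)
                  = some (node (leaf x) r₀) := by
                have : restrict (node l r) S = some r₀ := by
                  simp [restrict, hL, hR]
                exact restrict_rootgraft hx this
              rw [hGp', hGq'] at hiso
              have hroot : graftAt x r [] = some (node (leaf x) r) := by simp [graftAt]
              have hIH : cost r [] q' ≤ (labels r \ S).card := by
                apply ihr gr hxr hroot hrq hxS
                rw [restrict_rootgraft hxr hR, hgq]
                exact hiso
              have h1 := card_sdiff_of_inter_empty (restrict_eq_none_iff.mp hL)
              simp only [cost]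
              omega
            · -- both survive : impossible
              exfalso
              have hGq' : restrict (node l rq) (insert x S) = some (node l₀ gq) := by
                simp [restrict, hresl, hL, hgq]
              have hGp' : restrict (node (leaf x) (node l r)) (insert x S)
                  = some (node (leaf x) (node l₀ r₀)) := by
                have : restrict (node l r) S = some (node l₀ r₀) := by
                  simp [restrict, hL, hR]
                exact restrict_rootgraft hx this
              rw [hGp', hGq'] at hiso
              have hl₀ := labels_restrict hL
              have hr₀ := labels_restrict hR
              cases hiso with
              | node h1 h2 =>
                  have hll := iso_labels h1
                  have hxmem : x ∈ labels l₀ := by rw [← hll]; simp [labels]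
                  rw [hl₀] at hxmem
                  exact hxl (Finset.mem_inter.mp hxmem).1
              | swap h1 h2 =>
                  have h2l := iso_labels h2
                  simp only [labels] at h2l
                  obtain ⟨y, hy⟩ := labels_nonempty r₀
                  have hyl : y ∈ labels l₀ := by
                    rw [← h2l]; exact Finset.mem_union_right _ hy
                  rw [hl₀] at hyl
                  rw [hr₀] at hy
                  exact Finset.disjoint_left.mp hdisj (Finset.mem_inter.mp hyl).1
                    (Finset.mem_inter.mp hy).1
        · -- q = true :: q' : q inside l
          obtain ⟨lq, hlq, rfl⟩ := graft_cons_true hGq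
          obtain ⟨gq, hgq, hgql⟩ := restrict_graft_insert hlq S
          rcases hL : restrict l S with _ | l₀
          · have h1 := card_sdiff_of_inter_empty (restrict_eq_none_iff.mp hL)
            simp only [cost]
            omega
          · rcases hR : restrict r S with _ | r₀
            · have hGq' : restrict (node lq r) (insert x S) = some gq := by
                simp [restrict, hresr, hR, hgq]
              have hGp' : restrict (node (leaf x) (node l r)) (insert x S)
                  = some (node (leaf x) l₀) := by
                have : restrict (node l r) S = some l₀ := by
                  simp [restrict, hL, hR]
                exact restrict_rootgraft hx this
              rw [hGp', hGq'] at hiso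
              have hroot : graftAt x l [] = some (node (leaf x) l) := by simp [graftAt]
              have hIH : cost l [] q' ≤ (labels l \ S).card := by
                apply ihl gl hxl hroot hlq hxS
                rw [restrict_rootgraft hxl hL, hgq]
                exact hiso
              have h1 := card_sdiff_of_inter_empty (restrict_eq_none_iff.mp hR)
              simp only [cost]
              omega
            · exfalso
              have hGq' : restrict (node lq r) (insert x S) = some (node gq r₀) := by
                simp [restrict, hresr, hR, hgq]
              have hGp' : restrict (node (leaf x) (node l r)) (insert x S)
                  = some (node (leaf x) (node l₀ r₀)) := by
                have : restrict (node l r) S = some (node l₀ r₀) := by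
                  simp [restrict, hL, hR]
                exact restrict_rootgraft hx this
              rw [hGp', hGq'] at hiso
              have hl₀ := labels_restrict hL
              have hr₀ := labels_restrict hR
              cases hiso with
              | node h1 h2 =>
                  have h2l := iso_labels h2
                  simp only [labels] at h2l
                  obtain ⟨y, hy⟩ := labels_nonempty l₀
                  have hyr : y ∈ labels r₀ := by
                    rw [← h2l]; exact Finset.mem_union_left _ hy
                  rw [hr₀] at hyr
                  rw [hl₀] at hy
                  exact Finset.disjoint_left.mp hdisj (Finset.mem_inter.mp hy).1
                    (Finset.mem_inter.mp hyr).1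
              | swap h1 h2 =>
                  have hll := iso_labels h1
                  have hx' : x ∈ labels r₀ := by rw [← hll]; simp [labels]
                  rw [hr₀] at hx'
                  exact hxr (Finset.mem_inter.mp hx').1
      · -- p = b :: p'
        rcases q with _ | ⟨c, q'⟩
        · -- q = [] : symmetric to the previous case
          obtain rfl := graft_nil hGq
          have hiso' := optIso_symm hiso
          rw [cost_comm]
          cases b
          · -- p = false :: p'
            obtain ⟨rp, hrp, rfl⟩ := graft_cons_false hGp
            obtain ⟨gp, hgp, hgpl⟩ := restrict_graft_insert hrp S
            rcases hR : restrict r S with _ | r₀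
            · have h1 := card_sdiff_of_inter_empty (restrict_eq_none_iff.mp hR)
              simp only [cost]
              omega
            · rcases hL : restrict l S with _ | l₀
              · have hGp' : restrict (node l rp) (insert x S) = some gp := by
                  simp [restrict, hresl, hL, hgp]
                have hGq' : restrict (node (leaf x) (node l r)) (insert x S)
                    = some (node (leaf x) r₀) := by
                  have : restrict (node l r) S = some r₀ := by
                    simp [restrict, hL, hR]
                  exact restrict_rootgraft hx this
                rw [hGp', hGq'] at hiso'
                have hroot : graftAt x r [] = some (node (leaf x) r) := by simp [graftAt]
                have hIH : cost r [] p' ≤ (labels r \ S).card := by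
                  apply ihr gr hxr hroot hrp hxS
                  rw [restrict_rootgraft hxr hR, hgp]
                  exact hiso'
                have h1 := card_sdiff_of_inter_empty (restrict_eq_none_iff.mp hL)
                simp only [cost]
                omega
              · exfalso
                have hGp' : restrict (node l rp) (insert x S) = some (node l₀ gp) := by
                  simp [restrict, hresl, hL, hgp]
                have hGq' : restrict (node (leaf x) (node l r)) (insert x S)
                    = some (node (leaf x) (node l₀ r₀)) := by
                  have : restrict (node l r) S = some (node l₀ r₀) := by
                    simp [restrict, hL, hR]
                  exact restrict_rootgraft hx this
                rw [hGp', hGq'] at hiso'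
                have hl₀ := labels_restrict hL
                have hr₀ := labels_restrict hR
                cases hiso' with
                | node h1 h2 =>
                    have hll := iso_labels h1
                    have hxmem : x ∈ labels l₀ := by rw [← hll]; simp [labels]
                    rw [hl₀] at hxmem
                    exact hxl (Finset.mem_inter.mp hxmem).1
                | swap h1 h2 =>
                    have h2l := iso_labels h2
                    simp only [labels] at h2l
                    obtain ⟨y, hy⟩ := labels_nonempty r₀
                    have hyl : y ∈ labels l₀ := by
                      rw [← h2l]; exact Finset.mem_union_right _ hy
                    rw [hl₀] at hyl
                    rw [hr₀] at hy
                    exact Finset.disjoint_left.mp hdisj (Finset.mem_inter.mp hyl).1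
                      (Finset.mem_inter.mp hy).1
          · -- p = true :: p'
            obtain ⟨lp, hlp, rfl⟩ := graft_cons_true hGp
            obtain ⟨gp, hgp, hgpl⟩ := restrict_graft_insert hlp S
            rcases hL : restrict l S with _ | l₀
            · have h1 := card_sdiff_of_inter_empty (restrict_eq_none_iff.mp hL)
              simp only [cost]
              omega
            · rcases hR : restrict r S with _ | r₀
              · have hGp' : restrict (node lp r) (insert x S) = some gp := by
                  simp [restrict, hresr, hR, hgp]
                have hGq' : restrict (node (leaf x) (node l r)) (insert x S)
                    = some (node (leaf x) l₀) := by
                  have : restrict (node l r) S = some l₀ := by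
                    simp [restrict, hL, hR]
                  exact restrict_rootgraft hx this
                rw [hGp', hGq'] at hiso'
                have hroot : graftAt x l [] = some (node (leaf x) l) := by simp [graftAt]
                have hIH : cost l [] p' ≤ (labels l \ S).card := by
                  apply ihl gl hxl hroot hlp hxS
                  rw [restrict_rootgraft hxl hL, hgp]
                  exact hiso'
                have h1 := card_sdiff_of_inter_empty (restrict_eq_none_iff.mp hR)
                simp only [cost]
                omega
              · exfalso
                have hGp' : restrict (node lp r) (insert x S) = some (node gp r₀) := by
                  simp [restrict, hresr, hR, hgp]
                have hGq' : restrict (node (leaf x) (node l r)) (insert x S)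
                    = some (node (leaf x) (node l₀ r₀)) := by
                  have : restrict (node l r) S = some (node l₀ r₀) := by
                    simp [restrict, hL, hR]
                  exact restrict_rootgraft hx this
                rw [hGp', hGq'] at hiso'
                have hl₀ := labels_restrict hL
                have hr₀ := labels_restrict hR
                cases hiso' with
                | node h1 h2 =>
                    have h2l := iso_labels h2
                    simp only [labels] at h2l
                    obtain ⟨y, hy⟩ := labels_nonempty l₀
                    have hyr : y ∈ labels r₀ := by
                      rw [← h2l]; exact Finset.mem_union_left _ hy
                    rw [hr₀] at hyr
                    rw [hl₀] at hy
                    exact Finset.disjoint_left.mp hdisj (Finset.mem_inter.mp hy).1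
                      (Finset.mem_inter.mp hyr).1
                | swap h1 h2 =>
                    have hll := iso_labels h1
                    have hx' : x ∈ labels r₀ := by rw [← hll]; simp [labels]
                    rw [hr₀] at hx'
                    exact hxr (Finset.mem_inter.mp hx').1
        · -- p = b :: p', q = c :: q'
          cases b <;> cases c
          · -- (false, false) : both inside r
            obtain ⟨rp, hrp, rfl⟩ := graft_cons_false hGp
            obtain ⟨rq, hrq, rfl⟩ := graft_cons_false hGq
            obtain ⟨gp, hgp, hgpl⟩ := restrict_graft_insert hrp S
            obtain ⟨gq, hgq, hgql⟩ := restrict_graft_insert hrq S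
            rcases hL : restrict l S with _ | l₀
            · have hGp' : restrict (node l rp) (insert x S) = some gp := by
                simp [restrict, hresl, hL, hgp]
              have hGq' : restrict (node l rq) (insert x S) = some gq := by
                simp [restrict, hresl, hL, hgq]
              rw [hGp', hGq'] at hiso
              have hIH : cost r p' q' ≤ (labels r \ S).card := by
                apply ihr gr hxr hrp hrq hxS
                rw [hgp, hgq]
                exact hiso
              simp only [cost]
              omega
            · have hGp' : restrict (node l rp) (insert x S) = some (node l₀ gp) := by
                simp [restrict, hresl, hL, hgp]
              have hGq' : restrict (node l rq) (insert x S) = some (node l₀ gq) := by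
                simp [restrict, hresl, hL, hgq]
              rw [hGp', hGq'] at hiso
              cases hiso with
              | node h1 h2 =>
                  have hIH : cost r p' q' ≤ (labels r \ S).card := by
                    apply ihr gr hxr hrp hrq hxS
                    rw [hgp, hgq]
                    exact h2
                  simp only [cost]
                  omega
              | swap h1 h2 =>
                  exfalso
                  have hll := iso_labels h2
                  have hx' : x ∈ labels l₀ := by
                    rw [← hll, hgpl]; simp
                  rw [labels_restrict hL] at hx'
                  exact hxl (Finset.mem_inter.mp hx').1
          · -- (false, true) : p inside r, q inside l
            obtain ⟨rp, hrp, rfl⟩ := graft_cons_false hGp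
            obtain ⟨lq, hlq, rfl⟩ := graft_cons_true hGq
            obtain ⟨gp, hgp, hgpl⟩ := restrict_graft_insert hrp S
            obtain ⟨gq, hgq, hgql⟩ := restrict_graft_insert hlq S
            rcases hL : restrict l S with _ | l₀ <;> rcases hR : restrict r S with _ | r₀
            · -- both deleted
              have h1 := card_sdiff_of_inter_empty (restrict_eq_none_iff.mp hL)
              have h2 := card_sdiff_of_inter_empty (restrict_eq_none_iff.mp hR)
              have h3 := cost_le_sz l gl [] q'
              simp only [cost]
              omega
            · -- l deleted, r survives : x at root of r-side on q's tree
              have hgqleaf : restrict lq (insert x S) = some (leaf x) :=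
                restrict_graft_insert_of_empty gl hxl hlq (restrict_eq_none_iff.mp hL)
              have hGp' : restrict (node l rp) (insert x S) = some gp := by
                simp [restrict, hresl, hL, hgp]
              have hGq' : restrict (node lq r) (insert x S) = some (node (leaf x) r₀) := by
                simp [restrict, hresr, hR, hgqleaf]
              rw [hGp', hGq'] at hiso
              have hroot : graftAt x r [] = some (node (leaf x) r) := by simp [graftAt]
              have hIH : cost r p' [] ≤ (labels r \ S).card := by
                apply ihr gr hxr hrp hroot hxS
                rw [restrict_rootgraft hxr hR, hgp]
                exact hiso
              have h1 := card_sdiff_of_inter_empty (restrict_eq_none_iff.mp hL)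
              have hcc := cost_comm r p' []
              simp only [cost]
              omega
            · -- r deleted, l survives
              have hgpleaf : restrict rp (insert x S) = some (leaf x) :=
                restrict_graft_insert_of_empty gr hxr hrp (restrict_eq_none_iff.mp hR)
              have hGp' : restrict (node l rp) (insert x S) = some (node l₀ (leaf x)) := by
                simp [restrict, hresl, hL, hgpleaf]
              have hGq' : restrict (node lq r) (insert x S) = some gq := by
                simp [restrict, hresr, hR, hgq]
              rw [hGp', hGq'] at hiso
              have hiso2 : Iso (node (leaf x) l₀) gq :=
                iso_trans (Iso.swap (iso_refl _) (iso_refl _)) hiso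
              have hroot : graftAt x l [] = some (node (leaf x) l) := by simp [graftAt]
              have hIH : cost l [] q' ≤ (labels l \ S).card := by
                apply ihl gl hxl hroot hlq hxS
                rw [restrict_rootgraft hxl hL, hgq]
                exact hiso2
              have h1 := card_sdiff_of_inter_empty (restrict_eq_none_iff.mp hR)
              simp only [cost]
              omega
            · -- both survive : impossible
              exfalso
              have hGp' : restrict (node l rp) (insert x S) = some (node l₀ gp) := by
                simp [restrict, hresl, hL, hgp]
              have hGq' : restrict (node lq r) (insert x S) = some (node gq r₀) := by
                simp [restrict, hresr, hR, hgq]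
              rw [hGp', hGq'] at hiso
              cases hiso with
              | node h1 h2 =>
                  have hll := iso_labels h2
                  have hx' : x ∈ labels r₀ := by rw [← hll, hgpl]; simp
                  rw [labels_restrict hR] at hx'
                  exact hxr (Finset.mem_inter.mp hx').1
              | swap h1 h2 =>
                  have hll := iso_labels h1
                  obtain ⟨y, hy⟩ := labels_nonempty l₀
                  have hyr : y ∈ labels r₀ := by rw [← hll]; exact hy
                  rw [labels_restrict hL] at hy
                  rw [labels_restrict hR] at hyr
                  exact Finset.disjoint_left.mp hdisj (Finset.mem_inter.mp hy).1
                    (Finset.mem_inter.mp hyr).1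
          · -- (true, false) : p inside l, q inside r
            obtain ⟨lp, hlp, rfl⟩ := graft_cons_true hGp
            obtain ⟨rq, hrq, rfl⟩ := graft_cons_false hGq
            obtain ⟨gp, hgp, hgpl⟩ := restrict_graft_insert hlp S
            obtain ⟨gq, hgq, hgql⟩ := restrict_graft_insert hrq S
            rcases hL : restrict l S with _ | l₀ <;> rcases hR : restrict r S with _ | r₀
            · have h1 := card_sdiff_of_inter_empty (restrict_eq_none_iff.mp hL)
              have h2 := card_sdiff_of_inter_empty (restrict_eq_none_iff.mp hR)
              have h3 := cost_le_sz r gr [] q'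
              simp only [cost]
              omega
            · -- l deleted, r survives
              have hgpleaf : restrict lp (insert x S) = some (leaf x) :=
                restrict_graft_insert_of_empty gl hxl hlp (restrict_eq_none_iff.mp hL)
              have hGp' : restrict (node lp r) (insert x S) = some (node (leaf x) r₀) := by
                simp [restrict, hresr, hR, hgpleaf]
              have hGq' : restrict (node l rq) (insert x S) = some gq := by
                simp [restrict, hresl, hL, hgq]
              rw [hGp', hGq'] at hiso
              have hroot : graftAt x r [] = some (node (leaf x) r) := by simp [graftAt]
              have hIH : cost r [] q' ≤ (labels r \ S).card := by
                apply ihr gr hxr hroot hrq hxS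
                rw [restrict_rootgraft hxr hR, hgq]
                exact hiso
              have h1 := card_sdiff_of_inter_empty (restrict_eq_none_iff.mp hL)
              simp only [cost]
              omega
            · -- r deleted, l survives
              have hgqleaf : restrict rq (insert x S) = some (leaf x) :=
                restrict_graft_insert_of_empty gr hxr hrq (restrict_eq_none_iff.mp hR)
              have hGp' : restrict (node lp r) (insert x S) = some gp := by
                simp [restrict, hresr, hR, hgp]
              have hGq' : restrict (node l rq) (insert x S) = some (node l₀ (leaf x)) := by
                simp [restrict, hresl, hL, hgqleaf]
              rw [hGp', hGq'] at hiso
              have hiso2 : Iso gp (node (leaf x) l₀) :=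
                iso_trans hiso (Iso.swap (iso_refl _) (iso_refl _))
              have hroot : graftAt x l [] = some (node (leaf x) l) := by simp [graftAt]
              have hIH : cost l p' [] ≤ (labels l \ S).card := by
                apply ihl gl hxl hlp hroot hxS
                rw [restrict_rootgraft hxl hL, hgp]
                exact hiso2
              have h1 := card_sdiff_of_inter_empty (restrict_eq_none_iff.mp hR)
              have hcc := cost_comm l p' []
              simp only [cost]
              omega
            · exfalso
              have hGp' : restrict (node lp r) (insert x S) = some (node gp r₀) := by
                simp [restrict, hresr, hR, hgp]
              have hGq' : restrict (node l rq) (insert x S) = some (node l₀ gq) := by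
                simp [restrict, hresl, hL, hgq]
              rw [hGp', hGq'] at hiso
              cases hiso with
              | node h1 h2 =>
                  have hll := iso_labels h1
                  have hx' : x ∈ labels l₀ := by rw [← hll, hgpl]; simp
                  rw [labels_restrict hL] at hx'
                  exact hxl (Finset.mem_inter.mp hx').1
              | swap h1 h2 =>
                  have hll := iso_labels h2
                  obtain ⟨y, hy⟩ := labels_nonempty r₀
                  have hyl : y ∈ labels l₀ := by rw [← hll]; exact hy
                  rw [labels_restrict hR] at hy
                  rw [labels_restrict hL] at hyl
                  exact Finset.disjoint_left.mp hdisj (Finset.mem_inter.mp hyl).1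
                    (Finset.mem_inter.mp hy).1
          · -- (true, true) : both inside l
            obtain ⟨lp, hlp, rfl⟩ := graft_cons_true hGp
            obtain ⟨lq, hlq, rfl⟩ := graft_cons_true hGq
            obtain ⟨gp, hgp, hgpl⟩ := restrict_graft_insert hlp S
            obtain ⟨gq, hgq, hgql⟩ := restrict_graft_insert hlq S
            rcases hR : restrict r S with _ | r₀
            · have hGp' : restrict (node lp r) (insert x S) = some gp := by
                simp [restrict, hresr, hR, hgp]
              have hGq' : restrict (node lq r) (insert x S) = some gq := by
                simp [restrict, hresr, hR, hgq]
              rw [hGp', hGq'] at hiso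
              have hIH : cost l p' q' ≤ (labels l \ S).card := by
                apply ihl gl hxl hlp hlq hxS
                rw [hgp, hgq]
                exact hiso
              simp only [cost]
              omega
            · have hGp' : restrict (node lp r) (insert x S) = some (node gp r₀) := by
                simp [restrict, hresr, hR, hgp]
              have hGq' : restrict (node lq r) (insert x S) = some (node gq r₀) := by
                simp [restrict, hresr, hR, hgq]
              rw [hGp', hGq'] at hiso
              cases hiso with
              | node h1 h2 =>
                  have hIH : cost l p' q' ≤ (labels l \ S).card := by
                    apply ihl gl hxl hlp hlq hxS
                    rw [hgp, hgq]
                    exact h1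
                  simp only [cost]
                  omega
              | swap h1 h2 =>
                  exfalso
                  have hll := iso_labels h1
                  have hx' : x ∈ labels r₀ := by
                    rw [← hll, hgpl]; simp
                  rw [labels_restrict hR] at hx'
                  exact hxr (Finset.mem_inter.mp hx').1

end LTree

namespace LTree

variable {α : Type u} [DecidableEq α]

theorem remove_def (T : LTree α) (X : Finset α) : remove T X = restrict T (labels T \ X) := rfl

theorem dLR_le {T₁ T₂ : LTree α} {X : Finset α} (hX : X ⊆ labels T₁ ∪ labels T₂)
    (h : OptIso (remove T₁ X) (remove T₂ X)) : dLR T₁ T₂ ≤ X.card :=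
  Nat.sInf_le ⟨X, hX, rfl, h⟩

theorem remove_all (T : LTree α) {X : Finset α} (h : labels T ⊆ X) : remove T X = none := by
  rw [remove_def, restrict_eq_none_iff, Finset.sdiff_eq_empty_iff_subset.mpr h,
    Finset.inter_empty]

theorem dLR_spec (T₁ T₂ : LTree α) : ∃ X : Finset α, X ⊆ labels T₁ ∪ labels T₂ ∧
    X.card = dLR T₁ T₂ ∧ OptIso (remove T₁ X) (remove T₂ X) := by
  have hne : {n | ∃ X : Finset α, X ⊆ labels T₁ ∪ labels T₂ ∧ X.card = n ∧
      OptIso (remove T₁ X) (remove T₂ X)}.Nonempty := by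
    refine ⟨(labels T₁ ∪ labels T₂).card, labels T₁ ∪ labels T₂, subset_rfl, rfl, ?_⟩
    rw [remove_all T₁ Finset.subset_union_left, remove_all T₂ Finset.subset_union_right]
    trivial
  have := Nat.sInf_mem hne
  obtain ⟨X, hsub, hcard, hiso⟩ := this
  exact ⟨X, hsub, hcard, hiso⟩

theorem remove_empty (T : LTree α) : remove T ∅ = some T := by
  rw [remove_def, Finset.sdiff_empty]
  exact restrict_of_subset subset_rfl

theorem dLR_self (T : LTree α) : dLR T T = 0 := by
  have h := dLR_le (T₁ := T) (T₂ := T) (X := ∅) (by simp) (by rw [remove_empty]; exact iso_refl T)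
  simpa using h

theorem optIso_remove_mono {A B : LTree α} (hlab : labels A = labels B) {X Z : Finset α}
    (hXZ : X ⊆ Z) (h : OptIso (remove A X) (remove B X)) :
    OptIso (remove A Z) (remove B Z) := by
  have hiA : (labels A \ X) ∩ (labels A \ Z) = labels A \ Z := by
    apply Finset.inter_eq_right.mpr
    intro y hy
    simp only [Finset.mem_sdiff] at hy ⊢
    exact ⟨hy.1, fun hc => hy.2 (hXZ hc)⟩
  have hA : remove A Z = restrictO (remove A X) (labels A \ Z) := by
    rw [remove_def, remove_def, restrictO_restrict, hiA]
  have hiB : (labels B \ X) ∩ (labels B \ Z) = labels B \ Z := by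
    apply Finset.inter_eq_right.mpr
    intro y hy
    simp only [Finset.mem_sdiff] at hy ⊢
    exact ⟨hy.1, fun hc => hy.2 (hXZ hc)⟩
  have hB : remove B Z = restrictO (remove B X) (labels B \ Z) := by
    rw [remove_def, remove_def, restrictO_restrict, hiB]
  rw [hA, hB, ← hlab]
  exact optIso_restrictO h _

end LTree

open LTree

/-- Lemma 19 of the paper: candidate trees.  Under the
hypotheses of Statement 14, for `x ∈ X₁ \ X₂` there is a set `P` of at most
`18(d + d') + 8` trees on `𝒳` containing every tree `T'` with
`d_LR(T',T*) < d_LR(T₁,T*)` obtainable from `T₁` by pruning the leaf `x` and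
regrafting it. -/
theorem candidate_trees_exist {α : Type u} [DecidableEq α]
    (𝒳 : Finset α) (T₁ T₂ Tstar : LTree α) (d d' : ℕ) (hdd : d' ≤ d)
    (h₁ : IsTreeOn T₁ 𝒳) (h₂ : IsTreeOn T₂ 𝒳) (hstar : IsTreeOn Tstar 𝒳)
    (hlow : d < dLR T₁ T₂) (hhigh : dLR T₁ T₂ ≤ d' + d)
    (X₁ X₂ : Finset α) (hX₁ : X₁ ⊆ 𝒳) (hX₂ : X₂ ⊆ 𝒳)
    (e₁ : OptIso (remove T₁ X₁) (remove Tstar X₁))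
    (e₂ : OptIso (remove T₂ X₂) (remove Tstar X₂))
    (hc₁ : X₁.card ≤ d') (hc₂ : X₂.card ≤ d)
    (x : α) (hx : x ∈ X₁ \ X₂) :
    ∃ P : Finset (LTree α), P.card ≤ 18 * (d + d') + 8 ∧
      (∀ T ∈ P, IsTreeOn T 𝒳) ∧
      ∀ T' : LTree α, LPRStep x T₁ T' → dLR T' Tstar < dLR T₁ Tstar →
        ∃ T'' ∈ P, Iso T' T'' := by
  classical
  obtain ⟨g1, hl1⟩ := h₁
  obtain ⟨g2, hl2⟩ := h₂
  obtain ⟨gs, hls⟩ := hstar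
  have hx1 : x ∈ X₁ := (Finset.mem_sdiff.mp hx).1
  have hxX : x ∈ 𝒳 := hX₁ hx1
  have hdT₁ : dLR T₁ Tstar ≤ d' := by
    refine le_trans (dLR_le ?_ e₁) hc₁
    rw [hl1, hls, Finset.union_self]
    exact hX₁
  -- the pruned tree T₀ exists
  have hT0ex : ∃ T₀, remove T₁ {x} = some T₀ := by
    rcases hres : remove T₁ {x} with _ | T₀
    · exfalso
      rw [remove_def] at hres
      have hempty := restrict_eq_none_iff.mp hres
      rw [Finset.inter_eq_right.mpr Finset.sdiff_subset] at hempty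
      have hsub : labels T₁ ⊆ {x} := Finset.sdiff_eq_empty_iff_subset.mp hempty
      have hXx : 𝒳 = {x} := Finset.Subset.antisymm (hl1 ▸ hsub)
        (Finset.singleton_subset_iff.mpr hxX)
      have hT1leaf : T₁ = leaf x := eq_leaf_of_labels_singleton g1 (hl1.trans hXx)
      have hT2leaf : T₂ = leaf x := eq_leaf_of_labels_singleton g2 (hl2.trans hXx)
      have h0 : dLR T₁ T₂ ≤ 0 := by
        have := dLR_le (T₁ := T₁) (T₂ := T₂) (X := ∅) (by simp)
          (by rw [remove_empty, remove_empty, hT1leaf, hT2leaf]; exact iso_refl _)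
        simpa using this
      omega
    · exact ⟨T₀, rfl⟩
  obtain ⟨T₀, hT₀⟩ := hT0ex
  have hT₀' : restrict T₁ (𝒳 \ {x}) = some T₀ := by
    rw [remove_def, hl1] at hT₀
    exact hT₀
  have hT₀good : Good T₀ := good_restrict g1 hT₀'
  have hT₀lab : labels T₀ = 𝒳 \ {x} := by
    rw [labels_restrict hT₀', hl1, Finset.inter_eq_right.mpr Finset.sdiff_subset]
  have hxT₀ : x ∉ labels T₀ := by rw [hT₀lab]; simp
  have hins : insert x (𝒳 \ {x}) = 𝒳 := by
    rw [Finset.sdiff_singleton_eq_erase, Finset.insert_erase hxX]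
  -- labels of any graft of x onto T₀
  have hgraftlab : ∀ {q : List Bool} {T'' : LTree α}, graftAt x T₀ q = some T'' →
      labels T'' = 𝒳 := by
    intro q T'' hg
    rw [labels_graft hg, hT₀lab, hins]
  -- key : a removal witness of small cardinality avoids x
  have hkey : ∀ {q : List Bool} {T'' : LTree α}, graftAt x T₀ q = some T'' →
      ∀ {X : Finset α}, X ⊆ 𝒳 → OptIso (remove T'' X) (remove Tstar X) →
      X.card < dLR T₁ Tstar → x ∉ X := by
    intro q T'' hg X hXsub hiso hcard hmem
    have hxS : x ∉ 𝒳 \ X := by simp [hmem]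
    have hinter : (𝒳 \ {x}) ∩ (𝒳 \ X) = 𝒳 \ X := by
      apply Finset.inter_eq_right.mpr
      intro y hy
      simp only [Finset.mem_sdiff, Finset.mem_singleton] at hy ⊢
      refine ⟨hy.1, fun hc => ?_⟩
      subst hc
      exact hy.2 hmem
    have e' : remove T'' X = remove T₁ X := by
      rw [remove_def, remove_def, hgraftlab hg, hl1]
      rw [restrict_graft_not_mem hg hxS]
      have h2 : restrictO (restrict T₁ (𝒳 \ {x})) (𝒳 \ X) = restrict T₁ (𝒳 \ X) := by
        rw [restrictO_restrict, hinter]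
      rw [← h2, hT₀']
      rfl
    have hle : dLR T₁ Tstar ≤ X.card := by
      refine dLR_le ?_ ?_
      · rw [hl1, hls, Finset.union_self]; exact hXsub
      · rw [← e']; exact hiso
    omega
  by_cases himp : ∃ q ∈ addrF T₀, ∃ Tq, graftAt x T₀ q = some Tq ∧ dLR Tq Tstar < dLR T₁ Tstar
  · obtain ⟨q₀, hq₀mem, T'₀, hT'₀, himp₀⟩ := himp
    obtain ⟨X₀, hX₀sub, hX₀card, hX₀iso⟩ := dLR_spec T'₀ Tstar
    have hX₀𝒳 : X₀ ⊆ 𝒳 := by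
      rw [hgraftlab hT'₀, hls, Finset.union_self] at hX₀sub
      exact hX₀sub
    have hX₀lt : X₀.card < dLR T₁ Tstar := by rw [hX₀card]; exact himp₀
    have hX₀x : x ∉ X₀ := hkey hT'₀ hX₀𝒳 hX₀iso hX₀lt
    set m := 2 * d' with hm
    set C := (addrF T₀).filter (fun q => cost T₀ q₀ q ≤ m) with hC
    set P := C.image (fun q => (graftAt x T₀ q).getD (leaf x)) with hP
    refine ⟨P, ?_, ?_, ?_⟩
    · have h1 : P.card ≤ C.card := Finset.card_image_le
      have h2 : C.card ≤ 5 * m + 3 + 2 * min (cost T₀ q₀ []) m := count_card_le T₀ hT₀good q₀ m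
      have h3 : min (cost T₀ q₀ []) m ≤ m := min_le_right _ _
      have h4 : C.card ≤ 7 * m + 3 := by omega
      have h5 : m = 2 * d' := hm
      omega
    · intro T hT
      rw [hP] at hT
      simp only [Finset.mem_image] at hT
      obtain ⟨q, hqC, rfl⟩ := hT
      have hq := (Finset.mem_filter.mp hqC).1
      obtain ⟨G, hG⟩ := graft_isSome_of_mem_addrF hq
      rw [hG]
      simp only [Option.getD_some]
      exact ⟨good_graft hT₀good hxT₀ hG, hgraftlab hG⟩
    · intro T' hstep himpT'
      rcases hstep with ⟨hnone, _⟩ | ⟨T₀', p, hT₀'', hgraft⟩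
      · rw [hT₀] at hnone; exact absurd hnone (by simp)
      · rw [hT₀] at hT₀''
        have heq : T₀ = T₀' := by injection hT₀''
        rw [← heq] at hgraft
        obtain ⟨X, hXsub, hXcard, hXiso⟩ := dLR_spec T' Tstar
        have hX𝒳 : X ⊆ 𝒳 := by
          rw [hgraftlab hgraft, hls, Finset.union_self] at hXsub
          exact hXsub
        have hXlt : X.card < dLR T₁ Tstar := by rw [hXcard]; exact himpT'
        have hXx : x ∉ X := hkey hgraft hX𝒳 hXiso hXlt
        set Z := X ∪ X₀ with hZ
        have hZx : x ∉ Z := by simp [hZ, hXx, hX₀x]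
        have hiso1 : OptIso (remove T' Z) (remove Tstar Z) :=
          optIso_remove_mono ((hgraftlab hgraft).trans hls.symm) Finset.subset_union_left hXiso
        have hiso2 : OptIso (remove T'₀ Z) (remove Tstar Z) :=
          optIso_remove_mono ((hgraftlab hT'₀).trans hls.symm) Finset.subset_union_right hX₀iso
        have hiso3 : OptIso (remove T'₀ Z) (remove T' Z) := optIso_trans hiso2 (optIso_symm hiso1)
        have hsetq : 𝒳 \ Z = insert x ((𝒳 \ {x}) \ Z) := by
          ext y
          simp only [Finset.mem_sdiff, Finset.mem_insert, Finset.mem_singleton]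
          constructor
          · rintro ⟨hy𝒳, hyZ⟩
            by_cases hyx : y = x
            · exact Or.inl hyx
            · exact Or.inr ⟨⟨hy𝒳, hyx⟩, hyZ⟩
          · rintro (rfl | ⟨⟨hy1, _⟩, hy3⟩)
            · exact ⟨hxX, hZx⟩
            · exact ⟨hy1, hy3⟩
        have hSrw : ∀ (T'' : LTree α), labels T'' = 𝒳 →
            remove T'' Z = restrict T'' (insert x ((𝒳 \ {x}) \ Z)) := by
          intro T'' hlab
          rw [remove_def, hlab, hsetq]
        have hxS' : x ∉ (𝒳 \ {x}) \ Z := by simp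
        have hcost : cost T₀ q₀ p ≤ ((labels T₀) \ ((𝒳 \ {x}) \ Z)).card := by
          apply cost_le_of_optIso T₀ hT₀good hxT₀ hT'₀ hgraft hxS'
          rw [← hSrw T'₀ (hgraftlab hT'₀), ← hSrw T' (hgraftlab hgraft)]
          exact hiso3
        have hcost2 : ((labels T₀) \ ((𝒳 \ {x}) \ Z)).card ≤ Z.card := by
          rw [hT₀lab, Finset.sdiff_sdiff_self_left]
          exact Finset.card_le_card Finset.inter_subset_right
        have hZcard : Z.card ≤ m := by
          have h4 : Z.card ≤ X.card + X₀.card := by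
            rw [hZ]; exact Finset.card_union_le X X₀
          have h5 : m = 2 * d' := hm
          omega
        have hfin : cost T₀ q₀ p ≤ m := le_trans hcost (le_trans hcost2 hZcard)
        refine ⟨T', ?_, iso_refl T'⟩
        rw [hP]
        simp only [Finset.mem_image]
        refine ⟨p, Finset.mem_filter.mpr ⟨mem_addrF_of_graft hgraft, hfin⟩, by
          rw [hgraft]; simp⟩
  · refine ⟨∅, by simp, by simp, ?_⟩
    intro T' hstep himpT'
    exfalso
    rcases hstep with ⟨hnone, _⟩ | ⟨T₀', p, hT₀'', hgraft⟩
    · rw [hT₀] at hnone; exact absurd hnone (by simp)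
    · rw [hT₀] at hT₀''
      have heq : T₀ = T₀' := by injection hT₀''
      rw [← heq] at hgraft
      exact himp ⟨p, mem_addrF_of_graft hgraft, T', hgraft, himpT'⟩
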